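/- Let V be a finite ground set, m ≥ 1 and g ≥ 1 natural numbers, C ⊆ V a fixed set, e ∈ V ∖ C an element, and Rel : Finset V → Finset V any function satisfying Rel(N) ⊆ N for all N. For each group j ∈ {1,…,g}, let π_j : V → {1,…,m} be a uniformly random assignment (each element assigned independently and uniformly, and the g assignments mutually independent), and set X_{j,i} = π_j⁻¹(i). Let p = Pr_{X ∼ V(1/m)}[e ∈ Rel(C ∪ X ∪ {e})]. Then Pr[e ∈ ⋃_{j=1}^{g} ⋃_{i=1}^{m} Rel(C ∪ X_{j,i})] = 1 − (1 − p)^g. -/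

import Mathlib

open Finset


lemma fiber_card {V : Type*} [Fintype V] [DecidableEq V] {m : ℕ} (i : Fin m) (X : Finset V) :
    (Finset.univ.filter (fun σ : V → Fin m =>
      Finset.univ.filter (fun v => σ v = i) = X)).card
    = (m - 1) ^ (Fintype.card V - X.card) := by
  have hset : Finset.univ.filter (fun σ : V → Fin m =>
      Finset.univ.filter (fun v => σ v = i) = X)
      = Fintype.piFinset (fun v => if v ∈ X then ({i} : Finset (Fin m)) else Finset.univ.erase i) := by
    ext σ
    simp only [mem_filter, mem_univ, true_and, Fintype.mem_piFinset, Finset.ext_iff]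
    constructor
    · intro h v
      have hv' := h v
      by_cases hv : v ∈ X
      · simp [hv, hv'.mpr hv]
      · have : ¬ σ v = i := fun hc => hv (hv'.mp hc)
        simp [hv, this]
    · intro h v
      have hv' := h v
      by_cases hv : v ∈ X
      · simp [hv] at hv'
        simp [hv, hv']
      · simp [hv] at hv'
        simp [hv, hv']
  rw [hset, Fintype.card_piFinset]
  have hc : ∀ v : V, ((if v ∈ X then ({i} : Finset (Fin m)) else Finset.univ.erase i)).card
      = if v ∈ X then 1 else m - 1 := by
    intro v; by_cases hv : v ∈ X <;> simp [hv, Finset.card_erase_of_mem]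
  simp_rw [hc]
  rw [Finset.prod_ite (fun _ => 1) (fun _ => m - 1), Finset.prod_const, Finset.prod_const,
    one_pow, one_mul]
  congr 1
  have h2 : Finset.univ.filter (fun v => v ∉ X) = Xᶜ := by ext v; simp
  rw [h2, Finset.card_compl]

lemma fiber_sum {V : Type*} [Fintype V] [DecidableEq V] {m : ℕ} (i : Fin m) (G : Finset V → ℝ) :
    ∑ σ : V → Fin m, G (Finset.univ.filter (fun v => σ v = i))
    = ∑ X : Finset V, ((m:ℝ) - 1) ^ (Fintype.card V - X.card) * G X := by
  rw [← Finset.sum_fiberwise Finset.univ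
    (fun σ : V → Fin m => Finset.univ.filter (fun v => σ v = i))
    (fun σ => G (Finset.univ.filter (fun v => σ v = i)))]
  refine Finset.sum_congr rfl fun X _ => ?_
  have step : ∑ σ ∈ Finset.univ.filter (fun σ : V → Fin m =>
      Finset.univ.filter (fun v => σ v = i) = X), G (Finset.univ.filter (fun v => σ v = i))
      = ∑ _σ ∈ Finset.univ.filter (fun σ : V → Fin m =>
      Finset.univ.filter (fun v => σ v = i) = X), G X := by
    refine Finset.sum_congr rfl fun σ hσ => ?_
    rw [(Finset.mem_filter.mp hσ).2]
  rw [step, Finset.sum_const, nsmul_eq_mul, fiber_card]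
  have hm : 1 ≤ m := i.pos
  push_cast [Nat.cast_sub hm]
  ring


/-- the probability that a fixed element `e ∉ C` lands in the union of the
relevant sets over `g` independent random partitions of `V` into `m` parts equals
`1 - (1 - p)^g`, where `p = Pr_{X ∼ V(1/m)}[e ∈ Rel(C ∪ X ∪ {e})]`. -/
theorem stmt7 {V : Type*} [Fintype V] [DecidableEq V]
    (m g : ℕ) (hm : 1 ≤ m) (hg : 1 ≤ g)
    (C : Finset V) (e : V) (he : e ∉ C)
    (Rel : Finset V → Finset V) (hRel : ∀ N : Finset V, Rel N ⊆ N)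
    (p : ℝ)
    (hp : p = ∑ X : Finset V,
      ((1 / (m:ℝ)) ^ X.card * (1 - 1 / (m:ℝ)) ^ (Fintype.card V - X.card)) *
        (if e ∈ Rel (C ∪ X ∪ {e}) then 1 else 0)) :
    (∑ π : Fin g → V → Fin m,
        (if ∃ j : Fin g, ∃ i : Fin m,
            e ∈ Rel (C ∪ Finset.univ.filter (fun v => π j v = i)) then (1:ℝ) else 0))
      / (Fintype.card (Fin g → V → Fin m) : ℝ)
      = 1 - (1 - p) ^ g := by
  --proof
  classical
  set n := Fintype.card V with hn
  set F : (V → Fin m) → ℝ := fun σ =>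
    if e ∈ Rel (C ∪ Finset.univ.filter (fun v => σ v = σ e)) then 1 else 0 with hF
  set G : Finset V → ℝ := fun X => if e ∈ X ∧ e ∈ Rel (C ∪ X) then 1 else 0 with hG
  set M : ℝ := (m:ℝ) ^ n with hM
  have hm0 : (m:ℝ) ≠ 0 := by positivity
  have hMpos : (0:ℝ) < M := by positivity
  -- Step 1: pointwise indicator identity
  have step1 : ∀ π : Fin g → V → Fin m,
      (if ∃ j : Fin g, ∃ i : Fin m,
          e ∈ Rel (C ∪ Finset.univ.filter (fun v => π j v = i)) then (1:ℝ) else 0)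
      = 1 - ∏ j : Fin g, (1 - F (π j)) := by
    intro π
    by_cases hE : ∃ j : Fin g, e ∈ Rel (C ∪ Finset.univ.filter (fun v => π j v = π j e))
    · obtain ⟨j, hj⟩ := hE
      have h1 : (if ∃ j : Fin g, ∃ i : Fin m,
          e ∈ Rel (C ∪ Finset.univ.filter (fun v => π j v = i)) then (1:ℝ) else 0) = 1 :=
        if_pos ⟨j, π j e, hj⟩
      have h2 : (∏ j : Fin g, (1 - F (π j))) = 0 := by
        refine Finset.prod_eq_zero (Finset.mem_univ j) ?_
        simp only [hF, if_pos hj]; ring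
      rw [h1, h2]; ring
    · have h1 : ¬ ∃ j : Fin g, ∃ i : Fin m,
          e ∈ Rel (C ∪ Finset.univ.filter (fun v => π j v = i)) := by
        rintro ⟨j, i, hji⟩
        have hmem : e ∈ C ∪ Finset.univ.filter (fun v => π j v = i) := hRel _ hji
        have hei : π j e = i := by
          rcases Finset.mem_union.mp hmem with h | h
          · exact absurd h he
          · exact (Finset.mem_filter.mp h).2
        exact hE ⟨j, by rwa [hei]⟩
      have h2 : (∏ j : Fin g, (1 - F (π j))) = 1 := by
        refine Finset.prod_eq_one fun j _ => ?_
        have : F (π j) = 0 := by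
          simp only [hF, if_neg (fun hc => hE ⟨j, hc⟩)]
        rw [this]; ring
      rw [if_neg h1, h2]; ring
  -- Step 2: product-sum swap
  have step2 : ∑ π : Fin g → V → Fin m, ∏ j : Fin g, (1 - F (π j))
      = (∑ σ : V → Fin m, (1 - F σ)) ^ g := by
    have h1 : (∑ σ : V → Fin m, (1 - F σ)) ^ g
        = ∏ _j : Fin g, ∑ σ : V → Fin m, (1 - F σ) := by
      rw [Finset.prod_const, Finset.card_univ, Fintype.card_fin]
    rw [h1, Finset.prod_univ_sum (fun _ => (Finset.univ : Finset (V → Fin m)))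
      (fun _ σ => 1 - F σ), Fintype.piFinset_univ]
  -- Step 3: sum of F over single assignments
  set S : ℝ := ∑ X : Finset V, ((m:ℝ) - 1) ^ (n - X.card) * G X with hS
  have step3 : ∑ σ : V → Fin m, F σ = m * S := by
    have hpt : ∀ σ : V → Fin m, F σ
        = ∑ i : Fin m, G (Finset.univ.filter (fun v => σ v = i)) := by
      intro σ
      have h1 : ∀ i : Fin m, G (Finset.univ.filter (fun v => σ v = i))
          = if σ e = i then
              (if e ∈ Rel (C ∪ Finset.univ.filter (fun v => σ v = i)) then (1:ℝ) else 0)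
            else 0 := by
        intro i
        simp only [hG]
        by_cases h : σ e = i
        · simp [h]
        · simp [h]
      simp_rw [h1]
      rw [Finset.sum_ite_eq Finset.univ (σ e)
        (fun i => if e ∈ Rel (C ∪ Finset.univ.filter (fun v => σ v = i)) then (1:ℝ) else 0),
        if_pos (Finset.mem_univ _)]
    simp_rw [hpt]
    rw [Finset.sum_comm]
    have h2 : ∀ i : Fin m, ∑ σ : V → Fin m, G (Finset.univ.filter (fun v => σ v = i)) = S := by
      intro i
      rw [fiber_sum i G, hS, hn]
    simp_rw [h2]
    rw [Finset.sum_const, Finset.card_univ, Fintype.card_fin, nsmul_eq_mul]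
  -- Step 4: p = m * S / M
  have step4 : p = (m * S) / M := by
    rw [hp]
    have hw : ∀ X : Finset V,
        ((1/(m:ℝ))^X.card * (1 - 1/(m:ℝ))^(n - X.card)) = ((m:ℝ)-1)^(n - X.card) / M := by
      intro X
      have hk : X.card + (n - X.card) = n :=
        Nat.add_sub_cancel' (hn ▸ Finset.card_le_univ X)
      have h1 : (1 - 1/(m:ℝ)) = ((m:ℝ)-1)/m := by field_simp
      rw [h1, div_pow, div_pow, one_pow, div_mul_div_comm, one_mul, ← pow_add, hk, hM]
    simp_rw [hw, div_mul_eq_mul_div]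
    rw [← Finset.sum_div]
    congr 1
    -- claim: ∑_X (m-1)^(n-|X|) ind(C∪X∪{e}) = m * S
    set T : Finset V → ℝ := fun X =>
      ((m:ℝ)-1)^(n - X.card) * (if e ∈ Rel (C ∪ X ∪ {e}) then (1:ℝ) else 0) with hT
    have hsplit := Finset.sum_filter_add_sum_filter_not Finset.univ
      (fun X : Finset V => e ∈ X) T
    have hSfilter : S = ∑ X ∈ Finset.univ.filter (fun X : Finset V => e ∈ X),
        ((m:ℝ)-1)^(n - X.card) * G X := by
      rw [hS, Finset.sum_filter]
      refine Finset.sum_congr rfl fun X _ => ?_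
      by_cases hX : e ∈ X
      · rw [if_pos hX]
      · simp [hG, hX]
    have hA : ∑ X ∈ Finset.univ.filter (fun X : Finset V => e ∈ X), T X = S := by
      rw [hSfilter]
      refine Finset.sum_congr rfl fun X hX => ?_
      have hX' : e ∈ X := (Finset.mem_filter.mp hX).2
      have hU : C ∪ X ∪ {e} = C ∪ X := by
        rw [Finset.union_assoc]
        congr 1
        exact Finset.union_eq_left.mpr (Finset.singleton_subset_iff.mpr hX')
      simp only [hT, hG, hU, hX', true_and]
    have hB : ∑ X ∈ Finset.univ.filter (fun X : Finset V => ¬ e ∈ X), T X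
        = ((m:ℝ)-1) * S := by
      rw [hSfilter, Finset.mul_sum]
      refine Finset.sum_bij' (fun X _ => insert e X) (fun Y _ => Y.erase e)
        ?_ ?_ ?_ ?_ ?_
      · intro X hX
        simp only [Finset.mem_filter, Finset.mem_univ, true_and] at *
        exact Finset.mem_insert_self e X
      · intro Y hY
        simp only [Finset.mem_filter, Finset.mem_univ, true_and] at *
        exact Finset.notMem_erase e Y
      · intro X hX
        simp only [Finset.mem_filter, Finset.mem_univ, true_and] at hX
        exact Finset.erase_insert hX
      · intro Y hY
        simp only [Finset.mem_filter, Finset.mem_univ, true_and] at hY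
        exact Finset.insert_erase hY
      · intro X hX
        simp only [Finset.mem_filter, Finset.mem_univ, true_and] at hX
        have hcard : (insert e X).card = X.card + 1 := Finset.card_insert_of_notMem hX
        have hle : (insert e X).card ≤ n := hn ▸ Finset.card_le_univ _
        have hexp : n - X.card = (n - (insert e X).card) + 1 := by omega
        have hU : C ∪ X ∪ {e} = C ∪ insert e X := by
          rw [Finset.union_assoc]
          congr 1
          rw [Finset.union_comm]
          exact (Finset.insert_eq e X).symm
        simp only [hT, hG, hU, Finset.mem_insert_self e X, true_and, hexp, pow_succ]
        ring
    rw [← hsplit, hA, hB]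
    ring
  -- Assembly
  have hcard1 : ((Fintype.card (V → Fin m) : ℕ) : ℝ) = M := by
    rw [Fintype.card_fun, Fintype.card_fin, hM, hn]
    push_cast
    rfl
  have hcard2 : ((Fintype.card (Fin g → V → Fin m) : ℕ) : ℝ) = M ^ g := by
    rw [Fintype.card_fun, Fintype.card_fin, ← hcard1]
    push_cast
    rfl
  have hmS : (m:ℝ) * S = p * M := by
    rw [step4, div_mul_cancel₀]
    exact ne_of_gt hMpos
  have hsum1 : ∑ σ : V → Fin m, (1 - F σ) = M * (1 - p) := by
    rw [Finset.sum_sub_distrib, Finset.sum_const, Finset.card_univ, step3, hmS,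
      nsmul_eq_mul, mul_one, hcard1]
    ring
  simp_rw [step1]
  rw [Finset.sum_sub_distrib, Finset.sum_const, Finset.card_univ, step2, hsum1,
    nsmul_eq_mul, mul_one, hcard2, mul_pow]
  have hMg : M ^ g ≠ 0 := by positivity
  field_simp
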